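/- Let f : [1,∞) → (0,∞) be a positive function with x ↦ f(x)/x non-increasing and ∫₁^∞ f(x)/x² dx < ∞. Then there exists a monotone increasing function F : ℝ₊ → ℝ₊ with F(x) ≥ f(x) for all x ≥ 1, x ↦ F(x)/x non-increasing, ∫₁^∞ F(x)/x² dx < ∞, and F concave on ℝ₊. -/

import Mathlib

open MeasureTheory Set
open scoped ENNReal

section klebaner_aux

lemma aux_le_integral {g : ℝ → ℝ} (hg : Antitone g) {a b : ℝ} (hab : a ≤ b) :
    (b - a) * g b ≤ ∫ s in a..b, g s := by
  have h := intervalIntegral.integral_mono_on (μ := volume) hab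
      (intervalIntegrable_const (c := g b)) (hg.intervalIntegrable)
      (fun s hs => hg hs.2)
  simpa [intervalIntegral.integral_const, smul_eq_mul] using h

lemma aux_integral_le {g : ℝ → ℝ} (hg : Antitone g) {a b : ℝ} (hab : a ≤ b) :
    ∫ s in a..b, g s ≤ (b - a) * g a := by
  have h := intervalIntegral.integral_mono_on (μ := volume) hab
      (hg.intervalIntegrable) (intervalIntegrable_const (c := g a))
      (fun s hs => hg hs.1)
  simpa [intervalIntegral.integral_const, smul_eq_mul] using h

lemma aux_lintegral_inv_sq {t : ℝ} (ht : 1 ≤ t) :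
    ∫⁻ x in Set.Ici t, ENNReal.ofReal ((x ^ 2)⁻¹) = ENNReal.ofReal t⁻¹ := by
  have ht0 : (0:ℝ) < t := lt_of_lt_of_le one_pos ht
  have hIci : (volume : Measure ℝ).restrict (Set.Ici t) = volume.restrict (Set.Ioi t) := by
    rw [Measure.restrict_congr_set Ioi_ae_eq_Ici.symm]
  rw [hIci]
  have hint : IntegrableOn (fun x : ℝ => (x ^ 2)⁻¹) (Set.Ioi t) := by
    have := integrableOn_Ioi_rpow_of_lt (show (-2:ℝ) < -1 by norm_num) ht0
    refine this.congr_fun (fun x hx => ?_) measurableSet_Ioi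
    have hx0 : (0:ℝ) < x := ht0.trans hx
    show x ^ (-2:ℝ) = (x ^ 2)⁻¹
    rw [Real.rpow_neg hx0.le]
    rw [Real.rpow_two]
  rw [← ofReal_integral_eq_lintegral_ofReal hint
      (Filter.Eventually.of_forall fun x => by positivity)]
  congr 1
  have h1 : ∫ x in Set.Ioi t, (x ^ 2)⁻¹ = ∫ x in Set.Ioi t, x ^ (-2:ℝ) := by
    refine setIntegral_congr_fun measurableSet_Ioi (fun x hx => ?_)
    have hx0 : (0:ℝ) < x := ht0.trans hx
    rw [Real.rpow_neg hx0.le]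
    rw [Real.rpow_two]
  rw [h1, integral_Ioi_rpow_of_lt (by norm_num) ht0]
  rw [show (-2:ℝ) + 1 = -1 by norm_num, Real.rpow_neg_one]
  ring

lemma aux_integrable {g : ℝ → ℝ} (hg : Antitone g) (hg0 : ∀ s, 0 ≤ g s)
    (hint : IntegrableOn (fun s => g s / s) (Set.Ioi 1) volume) :
    IntegrableOn (fun x => (∫ s in (0:ℝ)..x, g s) / x ^ 2) (Set.Ici 1) volume := by
  set F : ℝ → ℝ := fun x => ∫ s in (0:ℝ)..x, g s with hF
  have hgm : Measurable g := hg.measurable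
  have hFmono : Monotone F := by
    intro x y hxy
    have : F y - F x = ∫ s in x..y, g s := by
      rw [hF]
      simp only [sub_eq_iff_eq_add]
      rw [eq_comm, add_comm]
      exact intervalIntegral.integral_add_adjacent_intervals
        (hg.intervalIntegrable) (hg.intervalIntegrable)
    nlinarith [aux_le_integral hg hxy, mul_nonneg (sub_nonneg.2 hxy) (hg0 y)]
  have hFmeas : Measurable F := hFmono.measurable
  have hF0 : ∀ x, 0 ≤ x → 0 ≤ F x := by
    intro x hx
    have := aux_le_integral hg hx
    have := mul_nonneg (by linarith : (0:ℝ) ≤ x - 0) (hg0 x)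
    simpa [hF] using le_trans (by simpa using this) (aux_le_integral hg hx)
  set G : ℝ → ℝ≥0∞ := fun s => ENNReal.ofReal (g s) with hG
  have hGmeas : Measurable G := ENNReal.measurable_ofReal.comp hgm
  -- pointwise identity on Ioi 1
  have key : ∀ x : ℝ, 1 < x → ENNReal.ofReal (F x / x ^ 2)
      = (∫⁻ s in Set.Ioc 0 x, G s) * ENNReal.ofReal ((x ^ 2)⁻¹) := by
    intro x hx
    have hx0 : (0:ℝ) ≤ x := by linarith
    have hFx : F x = ∫ s in Set.Ioc 0 x, g s := by
      rw [hF]; exact intervalIntegral.integral_of_le hx0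
    have hgint : IntegrableOn g (Set.Ioc 0 x) volume :=
      (intervalIntegrable_iff_integrableOn_Ioc_of_le hx0).1 hg.intervalIntegrable
    rw [div_eq_mul_inv, ENNReal.ofReal_mul (hF0 x hx0), hFx,
      ofReal_integral_eq_lintegral_ofReal hgint
        (Filter.Eventually.of_forall fun s => hg0 s)]
  -- the kernel
  set K : ℝ × ℝ → ℝ≥0∞ := fun p =>
    Set.indicator {q : ℝ × ℝ | 1 < q.1 ∧ 0 < q.2 ∧ q.2 ≤ q.1}
      (fun q => G q.2 * ENNReal.ofReal ((q.1 ^ 2)⁻¹)) p with hK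
  have hSmeas : MeasurableSet {q : ℝ × ℝ | 1 < q.1 ∧ 0 < q.2 ∧ q.2 ≤ q.1} := by
    refine MeasurableSet.inter (measurableSet_lt measurable_const measurable_fst) ?_
    exact MeasurableSet.inter (measurableSet_lt measurable_const measurable_snd)
      (measurableSet_le measurable_snd measurable_fst)
  have hKmeas : Measurable K := by
    refine Measurable.indicator ?_ hSmeas
    exact (hGmeas.comp measurable_snd).mul
      (ENNReal.measurable_ofReal.comp ((measurable_fst.pow_const 2).inv))
  -- step A: inner integral identity
  have stepA : ∀ x : ℝ,
      (Set.Ioi (1:ℝ)).indicator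
        (fun x => (∫⁻ s in Set.Ioc 0 x, G s) * ENNReal.ofReal ((x ^ 2)⁻¹)) x
      = ∫⁻ s, K (x, s) := by
    intro x
    by_cases hx : 1 < x
    · rw [Set.indicator_of_mem (show x ∈ Set.Ioi 1 from hx)]
      rw [← lintegral_mul_const _ (hGmeas)]
      rw [← lintegral_indicator measurableSet_Ioc]
      congr 1 with s
      simp only [hK, Set.indicator_apply, Set.mem_setOf_eq, Set.mem_Ioc, hx, true_and]
    · rw [Set.indicator_of_notMem (show x ∉ Set.Ioi 1 from hx)]
      symm
      have hz : ∀ s, K (x, s) = 0 := fun s =>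
        Set.indicator_of_notMem (fun hmem => hx hmem.1) _
      simp [hz]
  -- per-s bound after swapping
  have hbound : ∀ s : ℝ, (∫⁻ x, K (x, s))
      ≤ (Set.Ioi (0:ℝ)).indicator (fun s => G s * ENNReal.ofReal (max 1 s)⁻¹) s := by
    intro s
    by_cases hs : 0 < s
    · rw [Set.indicator_of_mem (show s ∈ Set.Ioi (0:ℝ) from hs)]
      have hptwise : ∀ x, K (x, s)
          ≤ (Set.Ici (max 1 s)).indicator (fun x => G s * ENNReal.ofReal ((x ^ 2)⁻¹)) x := by
        intro x
        by_cases hm : (x, s) ∈ {q : ℝ × ℝ | 1 < q.1 ∧ 0 < q.2 ∧ q.2 ≤ q.1}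
        · have hx' : x ∈ Set.Ici (1 ⊔ s) := max_le hm.1.le hm.2.2
          simp only [hK, Set.indicator_apply]
          rw [if_pos hm, if_pos hx']
        · simp only [hK, Set.indicator_apply]
          rw [if_neg hm]
          exact zero_le
      calc (∫⁻ x, K (x, s))
          ≤ ∫⁻ x, (Set.Ici (max 1 s)).indicator
              (fun x => G s * ENNReal.ofReal ((x ^ 2)⁻¹)) x := lintegral_mono hptwise
        _ = ∫⁻ x in Set.Ici (max 1 s), G s * ENNReal.ofReal ((x ^ 2)⁻¹) :=
            lintegral_indicator measurableSet_Ici _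
        _ = G s * ∫⁻ x in Set.Ici (max 1 s), ENNReal.ofReal ((x ^ 2)⁻¹) :=
            lintegral_const_mul _ (ENNReal.measurable_ofReal.comp
              ((measurable_id.pow_const 2).inv))
        _ = G s * ENNReal.ofReal (max 1 s)⁻¹ := by
            rw [aux_lintegral_inv_sq (le_max_left 1 s)]
    · rw [Set.indicator_of_notMem (show s ∉ Set.Ioi (0:ℝ) from hs)]
      have hz : ∀ x, K (x, s) = 0 := fun x =>
        Set.indicator_of_notMem (fun hmem => hs hmem.2.1) _
      simp [hz]
  -- finiteness of the bound
  have hfin : ∫⁻ s in Set.Ioi (0:ℝ), G s * ENNReal.ofReal (max 1 s)⁻¹ < ⊤ := by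
    have hsplit : Set.Ioi (0:ℝ) = Set.Ioc 0 1 ∪ Set.Ioi 1 :=
      (Set.Ioc_union_Ioi_eq_Ioi zero_le_one).symm
    rw [hsplit, lintegral_union measurableSet_Ioi (Set.Ioc_disjoint_Ioi le_rfl)]
    have hpart1 : ∫⁻ s in Set.Ioc (0:ℝ) 1, G s * ENNReal.ofReal (max 1 s)⁻¹ < ⊤ := by
      have hle : ∀ s ∈ Set.Ioc (0:ℝ) 1, G s * ENNReal.ofReal (max 1 s)⁻¹
          ≤ ENNReal.ofReal (g 0) := by
        intro s hs
        calc G s * ENNReal.ofReal (max 1 s)⁻¹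
            ≤ ENNReal.ofReal (g 0) * ENNReal.ofReal 1 := by
              gcongr
              · exact ENNReal.ofReal_le_ofReal (hg hs.1.le)
              · rw [inv_le_one_iff₀]; right; exact le_max_left 1 s
          _ = ENNReal.ofReal (g 0) := by simp
      calc ∫⁻ s in Set.Ioc (0:ℝ) 1, G s * ENNReal.ofReal (max 1 s)⁻¹
          ≤ ∫⁻ _ in Set.Ioc (0:ℝ) 1, ENNReal.ofReal (g 0) :=
            setLIntegral_mono' measurableSet_Ioc hle
        _ = ENNReal.ofReal (g 0) * volume (Set.Ioc (0:ℝ) 1) := setLIntegral_const _ _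
        _ < ⊤ := by
            rw [Real.volume_Ioc]
            exact ENNReal.mul_lt_top ENNReal.ofReal_lt_top ENNReal.ofReal_lt_top
    have hpart2 : ∫⁻ s in Set.Ioi (1:ℝ), G s * ENNReal.ofReal (max 1 s)⁻¹ < ⊤ := by
      have heq : ∀ s ∈ Set.Ioi (1:ℝ), G s * ENNReal.ofReal (max 1 s)⁻¹
          = ENNReal.ofReal (g s / s) := by
        intro s hs
        rw [max_eq_right (le_of_lt hs), ← ENNReal.ofReal_mul (hg0 s), div_eq_mul_inv]
      rw [setLIntegral_congr_fun measurableSet_Ioi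
        heq]
      have hint' : IntegrableOn (fun s => g s / s) (Set.Ioi 1) volume := hint
      calc ∫⁻ s in Set.Ioi (1:ℝ), ENNReal.ofReal (g s / s)
          ≤ ∫⁻ s in Set.Ioi (1:ℝ), (‖g s / s‖₊ : ℝ≥0∞) := by
            refine lintegral_mono fun s => ?_
            rw [← ENNReal.ofReal_coe_nnreal, coe_nnnorm]
            exact ENNReal.ofReal_le_ofReal (le_abs_self _)
        _ < ⊤ := hint'.2
    exact ENNReal.add_lt_top.2 ⟨hpart1, hpart2⟩
  -- main finiteness
  have hmain : ∫⁻ x in Set.Ioi (1:ℝ), ENNReal.ofReal (F x / x ^ 2) < ⊤ := by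
    have h1 : ∫⁻ x in Set.Ioi (1:ℝ), ENNReal.ofReal (F x / x ^ 2)
        = ∫⁻ x in Set.Ioi 1, (∫⁻ s in Set.Ioc 0 x, G s) * ENNReal.ofReal ((x ^ 2)⁻¹) :=
      setLIntegral_congr_fun measurableSet_Ioi
        (fun x hx => key x hx)
    rw [h1, ← lintegral_indicator measurableSet_Ioi]
    calc ∫⁻ x, (Set.Ioi (1:ℝ)).indicator
          (fun x => (∫⁻ s in Set.Ioc 0 x, G s) * ENNReal.ofReal ((x ^ 2)⁻¹)) x
        = ∫⁻ x, ∫⁻ s, K (x, s) := lintegral_congr stepA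
      _ = ∫⁻ s, ∫⁻ x, K (x, s) :=
          lintegral_lintegral_swap hKmeas.aemeasurable
      _ ≤ ∫⁻ s, (Set.Ioi (0:ℝ)).indicator
            (fun s => G s * ENNReal.ofReal (max 1 s)⁻¹) s := lintegral_mono hbound
      _ = ∫⁻ s in Set.Ioi (0:ℝ), G s * ENNReal.ofReal (max 1 s)⁻¹ :=
          lintegral_indicator measurableSet_Ioi _
      _ < ⊤ := hfin
  -- conclude
  have hΙ : IntegrableOn (fun x => F x / x ^ 2) (Set.Ioi 1) volume := by
    constructor
    · exact ((hFmeas.div ((measurable_id.pow_const 2)))).aestronglyMeasurable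
    · rw [hasFiniteIntegral_iff_ofReal]
      · exact hmain
      · refine (ae_restrict_iff' measurableSet_Ioi).2
          (Filter.Eventually.of_forall fun x hx => ?_)
        have hx0 : (0:ℝ) < x := lt_trans one_pos hx
        exact div_nonneg (hF0 x hx0.le) (by positivity)
  rwa [← integrableOn_Ici_iff_integrableOn_Ioi] at hΙ

end klebaner_aux

/-- Klebaner's regularization lemma: if `f : [1,∞) → (0,∞)` has `x ↦ f(x)/x`
non-increasing and `∫₁^∞ f(x)/x² dx < ∞`, then there is a monotone increasing
`F : ℝ₊ → ℝ₊` with `F ≥ f` on `[1,∞)`, `x ↦ F(x)/x` non-increasing,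
`∫₁^∞ F(x)/x² dx < ∞`, and `F` concave on `ℝ₊`. -/
theorem concave_majorant_exists (f : ℝ → ℝ)
    (hfpos : ∀ x : ℝ, 1 ≤ x → 0 < f x)
    (hfratio : AntitoneOn (fun x => f x / x) (Set.Ici (1 : ℝ)))
    (hfint : IntegrableOn (fun x => f x / x ^ 2) (Set.Ici (1 : ℝ))) :
    ∃ F : ℝ → ℝ,
      (∀ x : ℝ, 0 ≤ x → 0 ≤ F x) ∧
      MonotoneOn F (Set.Ici (0 : ℝ)) ∧
      (∀ x : ℝ, 1 ≤ x → f x ≤ F x) ∧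
      AntitoneOn (fun x => F x / x) (Set.Ioi (0 : ℝ)) ∧
      IntegrableOn (fun x => F x / x ^ 2) (Set.Ici (1 : ℝ)) ∧
      ConcaveOn ℝ (Set.Ici (0 : ℝ)) F := by
  set g : ℝ → ℝ := fun s => f (max s 1) / max s 1 with hgdef
  have hg_anti : Antitone g := by
    intro s t hst
    exact hfratio (le_max_right s 1) (le_max_right t 1) (max_le_max hst le_rfl)
  have hg0 : ∀ s, 0 < g s := fun s =>
    div_pos (hfpos _ (le_max_right s 1)) (lt_of_lt_of_le one_pos (le_max_right s 1))
  have hg0' : ∀ s, 0 ≤ g s := fun s => (hg0 s).le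
  set F : ℝ → ℝ := fun x => ∫ s in (0:ℝ)..x, g s with hFdef
  have hFadd : ∀ x y : ℝ, F y - F x = ∫ s in x..y, g s := by
    intro x y
    rw [hFdef]
    simp only [sub_eq_iff_eq_add]
    rw [eq_comm, add_comm]
    exact intervalIntegral.integral_add_adjacent_intervals
      (hg_anti.intervalIntegrable) (hg_anti.intervalIntegrable)
  have hFnn : ∀ x : ℝ, 0 ≤ x → 0 ≤ F x := by
    intro x hx
    have h1 := aux_le_integral hg_anti hx
    have h2 : 0 ≤ (x - 0) * g x := mul_nonneg (by linarith) (hg0' x)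
    rw [hFdef]; linarith
  have hFlower : ∀ x : ℝ, 0 ≤ x → x * g x ≤ F x := by
    intro x hx
    have h1 := aux_le_integral hg_anti hx
    rw [hFdef]; linarith [h1]
  have hFmono : Monotone F := by
    intro x y hxy
    have h1 := aux_le_integral hg_anti hxy
    have h2 : 0 ≤ (y - x) * g y := mul_nonneg (by linarith) (hg0' y)
    have h3 := hFadd x y
    linarith
  refine ⟨F, hFnn, hFmono.monotoneOn _, ?_, ?_, ?_, ?_⟩
  · -- majorant
    intro x hx
    have hx0 : (0:ℝ) < x := lt_of_lt_of_le one_pos hx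
    have hmax : max x 1 = x := max_eq_left hx
    have hgx : g x = f x / x := by rw [hgdef]; simp only []; rw [hmax]
    have := hFlower x hx0.le
    rw [hgx, mul_div_cancel₀ _ (ne_of_gt hx0)] at this
    exact this
  · -- ratio antitone
    intro x hx y hy hxy
    have hx0 : (0:ℝ) < x := hx
    have hy0 : (0:ℝ) < y := hy
    simp only []
    rw [div_le_div_iff₀ hy0 hx0]
    have h1 : F y - F x ≤ (y - x) * g x := by
      rw [hFadd x y]; exact aux_integral_le hg_anti hxy
    have h2 : x * g x ≤ F x := hFlower x hx0.le
    nlinarith [sub_nonneg.2 hxy]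
  · -- integrability
    have hint : IntegrableOn (fun s => g s / s) (Set.Ioi 1) volume := by
      have h1 : IntegrableOn (fun x => f x / x ^ 2) (Set.Ioi 1) volume :=
        hfint.mono_set Set.Ioi_subset_Ici_self
      refine h1.congr_fun (fun s hs => ?_) measurableSet_Ioi
      have hs1 : (1:ℝ) ≤ s := le_of_lt hs
      rw [hgdef]
      simp only []
      rw [max_eq_left hs1, div_div, ← sq, sq]
    exact aux_integrable hg_anti hg0' hint
  · -- concavity
    refine concaveOn_of_slope_anti_adjacent (convex_Ici 0) ?_
    intro x y z _ _ hxy hyz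
    have hupper : F z - F y ≤ (z - y) * g y := by
      rw [hFadd y z]; exact aux_integral_le hg_anti hyz.le
    have hlower : (y - x) * g y ≤ F y - F x := by
      rw [hFadd x y]; exact aux_le_integral hg_anti hxy.le
    have h1 : (F z - F y) / (z - y) ≤ g y := by
      rw [div_le_iff₀ (sub_pos.2 hyz)]; linarith
    have h2 : g y ≤ (F y - F x) / (y - x) := by
      rw [le_div_iff₀ (sub_pos.2 hxy)]; linarith
    linarith
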